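/- (Product of two FOQCS-LCU block encodings.) Let A = Σ_{i,j} α_{ij} P(i,j) and B = Σ_{p,q} β_{pq} P(p,q) be n-qubit operators in the Z–X Pauli basis, with normalizations λ_A = Σ|α_{ij}| and λ_B = Σ|β_{pq}|. Define on ancilla registers of 2n + 2n qubits the right state |R⟩ = (λ_A λ_B)^{-1/2} Σ e^{i(arg α_{ij} + arg β_{pq})} √(|α_{ij}||β_{pq}|) |i⟩|j⟩|p⟩|q⟩ and left state |L⟩ = (λ_A λ_B)^{-1/2} Σ √(|α_{ij}||β_{pq}|) |i⟩|j⟩|p⟩|q⟩, and let W be the unitary acting by W(|i⟩|j⟩|p⟩|q⟩ ⊗ |φ⟩) = |i⟩|j⟩|p⟩|q⟩ ⊗ (⊗_ℓ Z^{q_ℓ} X^{p_ℓ} Z^{j_ℓ} X^{i_ℓ}) |φ⟩. Then (⟨L| ⊗ I) W (|R⟩ ⊗ I) φ = (λ_A λ_B)^{-1} (B A) φ for all n-qubit vectors φ. -/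

import Mathlib

open Matrix

noncomputable section

/-- Pauli `X`. -/
def X : Matrix (Fin 2) (Fin 2) ℂ := !![0, 1; 1, 0]

/-- Pauli `Z`. -/
def Z : Matrix (Fin 2) (Fin 2) ℂ := !![1, 0; 0, -1]

/-- The `n`-qubit operator `P(i,j) = ⊗_{ℓ=0}^{n-1} Z^{j_ℓ} X^{i_ℓ}`. -/
def P (n : ℕ) (i j : Fin n → Fin 2) :
    Matrix (Fin n → Fin 2) (Fin n → Fin 2) ℂ :=
  fun x y => ∏ ℓ, (Z ^ (j ℓ : ℕ) * X ^ (i ℓ : ℕ)) (x ℓ) (y ℓ)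

/-- The `n`-qubit operator `⊗_{ℓ=0}^{n-1} Z^{q_ℓ} X^{p_ℓ} Z^{j_ℓ} X^{i_ℓ}`. -/
def Q (n : ℕ) (i j p q : Fin n → Fin 2) :
    Matrix (Fin n → Fin 2) (Fin n → Fin 2) ℂ :=
  fun x y =>
    ∏ ℓ, (Z ^ (q ℓ : ℕ) * X ^ (p ℓ : ℕ) * Z ^ (j ℓ : ℕ) * X ^ (i ℓ : ℕ)) (x ℓ) (y ℓ)

/-- Ancilla index for the product of two block encodings: `((i,j),(p,q))`. -/
abbrev Anc2 (n : ℕ) :=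
  ((Fin n → Fin 2) × (Fin n → Fin 2)) × ((Fin n → Fin 2) × (Fin n → Fin 2))

lemma Qmul (n : ℕ) (i j p q : Fin n → Fin 2) :
    Q n i j p q = P n p q * P n i j := by
  ext x y
  rw [Matrix.mul_apply]
  unfold Q P
  have : ∀ ℓ : Fin n,
      (Z ^ (q ℓ : ℕ) * X ^ (p ℓ : ℕ) * Z ^ (j ℓ : ℕ) * X ^ (i ℓ : ℕ)) (x ℓ) (y ℓ)
      = ∑ v : Fin 2, (Z ^ (q ℓ : ℕ) * X ^ (p ℓ : ℕ)) (x ℓ) v *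
          (Z ^ (j ℓ : ℕ) * X ^ (i ℓ : ℕ)) v (y ℓ) := by
    intro ℓ
    rw [← Matrix.mul_apply, mul_assoc]
  simp_rw [this, Fintype.prod_sum]
  apply Finset.sum_congr rfl
  intro z _
  rw [Finset.prod_mul_distrib]

lemma keyscalar (c : ℂ) : Complex.exp (Complex.I * c.arg) * ‖c‖ = c := by
  rw [mul_comm, mul_comm Complex.I, Complex.norm_mul_exp_arg_mul_I]

lemma sum_swap4 {M : Type*} [AddCommMonoid M] {ι κ : Type*} [Fintype ι] [Fintype κ]
    (f : ι → ι → κ → κ → M) :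
    ∑ p, ∑ q, ∑ i, ∑ j, f p q i j = ∑ i, ∑ j, ∑ p, ∑ q, f p q i j := by
  trans ∑ p, ∑ i, ∑ q, ∑ j, f p q i j
  · exact Finset.sum_congr rfl fun p _ => Finset.sum_comm
  trans ∑ i, ∑ p, ∑ q, ∑ j, f p q i j
  · exact Finset.sum_comm
  refine Finset.sum_congr rfl fun i _ => ?_
  trans ∑ p, ∑ j, ∑ q, f p q i j
  · exact Finset.sum_congr rfl fun p _ => Finset.sum_comm
  exact Finset.sum_comm

/-- product of two FOQCS-LCU block encodings: with
`A = Σ α_{ij} P(i,j)`, `B = Σ β_{pq} P(p,q)`, `λ_A = Σ|α|`, `λ_B = Σ|β|`, the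
combined circuit `(⟨L| ⊗ I) W (|R⟩ ⊗ I)` applied to `φ` gives `(λ_A λ_B)⁻¹ (B A) φ`. -/
theorem stmt10 (n : ℕ)
    (α β : (Fin n → Fin 2) → (Fin n → Fin 2) → ℂ)
    (lamA lamB : ℝ)
    (hA : lamA = ∑ i, ∑ j, ‖α i j‖) (hApos : 0 < lamA)
    (hB : lamB = ∑ p, ∑ q, ‖β p q‖) (hBpos : 0 < lamB)
    (Rv Lv : Anc2 n → ℂ)
    (hR : Rv = fun a => (Real.sqrt (lamA * lamB) : ℂ)⁻¹ *
      Complex.exp (Complex.I * ((α a.1.1 a.1.2).arg + (β a.2.1 a.2.2).arg)) *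
      (Real.sqrt (‖α a.1.1 a.1.2‖ * ‖β a.2.1 a.2.2‖) : ℂ))
    (hL : Lv = fun a => (Real.sqrt (lamA * lamB) : ℂ)⁻¹ *
      (Real.sqrt (‖α a.1.1 a.1.2‖ * ‖β a.2.1 a.2.2‖) : ℂ))
    (W : Matrix (Anc2 n × (Fin n → Fin 2)) (Anc2 n × (Fin n → Fin 2)) ℂ)
    (hW : W = fun x y => if x.1 = y.1 then
      Q n y.1.1.1 y.1.1.2 y.1.2.1 y.1.2.2 x.2 y.2 else 0)
    (φ : (Fin n → Fin 2) → ℂ) :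
    (fun x => ∑ a : Anc2 n, (starRingEnd ℂ) (Lv a) *
        W.mulVec (fun p => Rv p.1 * φ p.2) (a, x))
    = ((lamA * lamB : ℝ) : ℂ)⁻¹ •
        ((∑ p, ∑ q, β p q • P n p q) * (∑ i, ∑ j, α i j • P n i j)).mulVec φ := by
  funext x
  have hLR : ∀ a : Anc2 n, (starRingEnd ℂ) (Lv a) * Rv a
      = ((lamA * lamB : ℝ) : ℂ)⁻¹ * (α a.1.1 a.1.2 * β a.2.1 a.2.2) := by
    intro a
    subst hR hL
    simp only [_root_.map_mul, Complex.conj_ofReal, map_inv₀]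
    have h1 : ((Real.sqrt (lamA * lamB) : ℂ))⁻¹ * ((Real.sqrt (lamA * lamB) : ℂ))⁻¹
        = (((lamA * lamB : ℝ)) : ℂ)⁻¹ := by
      rw [← mul_inv]
      norm_cast
      rw [Real.mul_self_sqrt (by positivity)]
    have h2 : (Real.sqrt (‖α a.1.1 a.1.2‖ * ‖β a.2.1 a.2.2‖) : ℂ)
        * (Real.sqrt (‖α a.1.1 a.1.2‖ * ‖β a.2.1 a.2.2‖) : ℂ)
        = (‖α a.1.1 a.1.2‖ : ℂ) * (‖β a.2.1 a.2.2‖ : ℂ) := by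
      norm_cast
      rw [Real.mul_self_sqrt (by positivity)]
    have h3 : Complex.exp (Complex.I * ((α a.1.1 a.1.2).arg + (β a.2.1 a.2.2).arg))
        * ((‖α a.1.1 a.1.2‖ : ℂ) * (‖β a.2.1 a.2.2‖ : ℂ))
        = α a.1.1 a.1.2 * β a.2.1 a.2.2 := by
      push_cast
      rw [mul_add, Complex.exp_add]
      rw [show Complex.exp (Complex.I * ((α a.1.1 a.1.2).arg : ℂ)) *
          Complex.exp (Complex.I * ((β a.2.1 a.2.2).arg : ℂ)) *
          ((‖α a.1.1 a.1.2‖ : ℂ) * (‖β a.2.1 a.2.2‖ : ℂ))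
          = (Complex.exp (Complex.I * ((α a.1.1 a.1.2).arg : ℂ)) * (‖α a.1.1 a.1.2‖ : ℂ))
          * (Complex.exp (Complex.I * ((β a.2.1 a.2.2).arg : ℂ)) * (‖β a.2.1 a.2.2‖ : ℂ)) by ring]
      rw [keyscalar, keyscalar]
    calc ((Real.sqrt (lamA*lamB):ℂ))⁻¹ * (Real.sqrt (‖α a.1.1 a.1.2‖ * ‖β a.2.1 a.2.2‖) : ℂ)
        * (((Real.sqrt (lamA*lamB):ℂ))⁻¹ *
          Complex.exp (Complex.I * ((α a.1.1 a.1.2).arg + (β a.2.1 a.2.2).arg)) *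
          (Real.sqrt (‖α a.1.1 a.1.2‖ * ‖β a.2.1 a.2.2‖) : ℂ))
        = (((Real.sqrt (lamA*lamB):ℂ))⁻¹ * ((Real.sqrt (lamA*lamB):ℂ))⁻¹)
          * (Complex.exp (Complex.I * ((α a.1.1 a.1.2).arg + (β a.2.1 a.2.2).arg)) *
            ((Real.sqrt (‖α a.1.1 a.1.2‖ * ‖β a.2.1 a.2.2‖) : ℂ)
            * (Real.sqrt (‖α a.1.1 a.1.2‖ * ‖β a.2.1 a.2.2‖) : ℂ))) := by ring
      _ = ((lamA * lamB : ℝ) : ℂ)⁻¹ * (α a.1.1 a.1.2 * β a.2.1 a.2.2) := by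
          rw [h1, h2, h3]
  have hmv : ∀ a : Anc2 n, W.mulVec (fun p => Rv p.1 * φ p.2) (a, x)
      = Rv a * ∑ t, Q n a.1.1 a.1.2 a.2.1 a.2.2 x t * φ t := by
    intro a
    subst hW
    simp only [Matrix.mulVec, dotProduct]
    rw [Fintype.sum_prod_type]
    rw [Finset.sum_eq_single a]
    · simp only [if_pos rfl, if_true, Finset.mul_sum]
      exact Finset.sum_congr rfl fun t _ => by ring
    · intro b _ hb
      simp [Ne.symm hb]
    · simp
  simp_rw [hmv, ← mul_assoc, hLR]
  have hM : (∑ p, ∑ q, β p q • P n p q) * (∑ i, ∑ j, α i j • P n i j)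
      = ∑ a : Anc2 n, (α a.1.1 a.1.2 * β a.2.1 a.2.2) •
          Q n a.1.1 a.1.2 a.2.1 a.2.2 := by
    simp_rw [Finset.sum_mul, Finset.mul_sum, smul_mul_assoc, mul_smul_comm, smul_smul, Qmul]
    rw [Fintype.sum_prod_type]
    simp_rw [Fintype.sum_prod_type]
    rw [sum_swap4]
    exact Finset.sum_congr rfl fun i _ => Finset.sum_congr rfl fun j _ =>
      Finset.sum_congr rfl fun p _ => Finset.sum_congr rfl fun q _ => by rw [mul_comm]
  rw [hM]
  simp only [Pi.smul_apply, Matrix.mulVec, dotProduct, Matrix.sum_apply,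
    Matrix.smul_apply, smul_eq_mul, Finset.mul_sum]
  rw [Finset.sum_comm]
  refine Finset.sum_congr rfl fun a _ => ?_
  rw [Finset.sum_mul, Finset.mul_sum]
  exact Finset.sum_congr rfl fun b _ => by ring
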